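/- Let k ≥ 1, n ≥ k+1, and let Z be a real n×(k+1) matrix of rank k+1 with no zero rows. Then the rational Grasstope of Z, i.e., the set of points [π(AZ)] ∈ ℝP^k as A ranges over all totally nonnegative k×n matrices of rank k with AZ of rank k, is contained in the topological closure of the open rational Grasstope of Z, i.e., of the set of points [π(BZ)] as B ranges over all totally positive k×n matrices with BZ of rank k. -/

import Mathlib

open Matrix

/-- The minor of a real `k × n` matrix on a set `S` of `k` columns. -/
noncomputable def minorCols {k n : ℕ} (A : Matrix (Fin k) (Fin n) ℝ)
    (S : Finset (Fin n)) (hS : S.card = k) : ℝ :=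
  (A.submatrix id (fun i => ((S.orderIsoOfFin hS) i : Fin n))).det

/-- The minor of a real `n × k` matrix on a set `S` of `k` rows. -/
noncomputable def minorRows {k n : ℕ} (B : Matrix (Fin n) (Fin k) ℝ)
    (S : Finset (Fin n)) (hS : S.card = k) : ℝ :=
  (B.submatrix (fun i => ((S.orderIsoOfFin hS) i : Fin n)) id).det

/-- A real `k × n` matrix is totally nonnegative if all its maximal (`k × k`) minors
are nonnegative. -/
def IsTotallyNonneg {k n : ℕ} (A : Matrix (Fin k) (Fin n) ℝ) : Prop :=
  ∀ (S : Finset (Fin n)) (hS : S.card = k), 0 ≤ minorCols A S hS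

/-- A real `k × n` matrix is totally positive if all its maximal (`k × k`) minors
are strictly positive. -/
def IsTotallyPos {k n : ℕ} (A : Matrix (Fin k) (Fin n) ℝ) : Prop :=
  ∀ (S : Finset (Fin n)) (hS : S.card = k), 0 < minorCols A S hS

/-- `π(B)`: the signed vector of maximal minors of a `k × (k+1)` matrix,
`π(B)_j = (-1)^j · det(B with column j deleted)` (`j` zero-indexed). -/
noncomputable def piVec {k : ℕ} (B : Matrix (Fin k) (Fin (k + 1)) ℝ) : Fin (k + 1) → ℝ :=
  fun j => (-1 : ℝ) ^ (j : ℕ) * (B.submatrix id j.succAbove).det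

/-- The `m = 1` Grasstope `G_{n,k,1}(Z) ⊆ ℝP^k`: the set of points `[π(A*Z)]` as `A` ranges
over totally nonnegative `k × n` matrices of rank `k` with `A * Z` of rank `k`. -/
noncomputable def grasstope1 {n k : ℕ} (Z : Matrix (Fin n) (Fin (k + 1)) ℝ) :
    Set (Projectivization ℝ (Fin (k + 1) → ℝ)) :=
  {P | ∃ (A : Matrix (Fin k) (Fin n) ℝ) (h : piVec (A * Z) ≠ 0),
    IsTotallyNonneg A ∧ A.rank = k ∧ (A * Z).rank = k ∧
    P = Projectivization.mk ℝ (piVec (A * Z)) h}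

/-- The open rational Grasstope of `Z`: the set of points `[π(A*Z)] ∈ ℝP^k` as `A` ranges
over totally positive `k × n` matrices with `A * Z` of rank `k`. -/
noncomputable def openGrasstope1 {n k : ℕ} (Z : Matrix (Fin n) (Fin (k + 1)) ℝ) :
    Set (Projectivization ℝ (Fin (k + 1) → ℝ)) :=
  {P | ∃ (A : Matrix (Fin k) (Fin n) ℝ) (h : piVec (A * Z) ≠ 0),
    IsTotallyPos A ∧ (A * Z).rank = k ∧
    P = Projectivization.mk ℝ (piVec (A * Z)) h}

/-- The quotient topology on a projectivization. -/
noncomputable instance {K V : Type*} [DivisionRing K] [AddCommGroup V] [Module K V]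
    [TopologicalSpace V] : TopologicalSpace (Projectivization K V) :=
  inferInstanceAs (TopologicalSpace (Quotient _))

open Topology Filter

/-- Chebyshev-system property of the monomials `x ↦ x^m` on `(0, ∞)`. -/
lemma cheb : ∀ (k : ℕ) (m : Fin k → ℕ), StrictMono m → ∀ (c x : Fin k → ℝ),
    (∀ i, 0 < x i) → StrictMono x →
    (∀ i, ∑ j, c j * x i ^ m j = 0) → ∀ j, c j = 0 := by
  intro k
  induction k with
  | zero => intro _ _ _ _ _ _ _ j; exact j.elim0
  | succ k ih =>
    intro m hm c x hx hxm hsum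
    set f : ℝ → ℝ := fun t => ∑ j, c j * t ^ (m j - m 0) with hf
    have hf0 : ∀ i, f (x i) = 0 := by
      intro i
      have hxi := (hx i).ne'
      have h1 : f (x i) * x i ^ (m 0) = 0 := by
        rw [hf]
        simp only
        rw [Finset.sum_mul, ← hsum i]
        refine Finset.sum_congr rfl fun j _ => ?_
        rw [mul_assoc, ← pow_add, Nat.sub_add_cancel (hm.monotone (Fin.zero_le j))]
      rcases mul_eq_zero.mp h1 with h | h
      · exact h
      · exact absurd h (pow_ne_zero _ hxi)
    have hder : ∀ t : ℝ,
        HasDerivAt f (∑ j, c j * (((m j - m 0 : ℕ) : ℝ) * t ^ (m j - m 0 - 1))) t := by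
      intro t
      exact HasDerivAt.fun_sum (fun j _ => ((hasDerivAt_pow (m j - m 0) t).const_mul (c j)))
    have hcont : Continuous f := by
      apply continuous_finset_sum
      intro j _
      exact continuous_const.mul (continuous_pow _)
    have hroots : ∀ i : Fin k, ∃ y, y ∈ Set.Ioo (x i.castSucc) (x i.succ) ∧
        (∑ j, c j * (((m j - m 0 : ℕ) : ℝ) * y ^ (m j - m 0 - 1))) = 0 := by
      intro i
      have hab : x i.castSucc < x i.succ := hxm Fin.castSucc_lt_succ
      obtain ⟨y, hy, hy0⟩ := exists_hasDerivAt_eq_zero hab hcont.continuousOn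
        (by rw [hf0, hf0]) (fun t _ => hder t)
      exact ⟨y, hy, hy0⟩
    choose y hy hy0 using hroots
    have hcsucc : ∀ j : Fin k, c j.succ = 0 := by
      have := ih (fun j => m j.succ - m 0 - 1)
        (by
          intro a b hab
          have h1 : m a.succ < m b.succ := hm (by simpa using hab)
          have h2 : m 0 < m a.succ := hm (Fin.succ_pos a)
          show m a.succ - m 0 - 1 < m b.succ - m 0 - 1
          omega)
        (fun j => c j.succ * ((m j.succ - m 0 : ℕ) : ℝ))
        y
        (fun i => lt_trans (hx _) (hy i).1)
        (by
          intro a b hab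
          calc y a < x a.succ := (hy a).2
            _ ≤ x b.castSucc := by
                apply hxm.monotone
                simpa [Fin.le_def] using hab
            _ < y b := (hy b).1)
        (by
          intro i
          have h0 := hy0 i
          rw [Fin.sum_univ_succ] at h0
          simp only [Nat.sub_self, Nat.cast_zero, zero_mul, mul_zero, zero_add] at h0
          rw [← h0]
          refine Finset.sum_congr rfl fun j _ => ?_
          ring)
      intro j
      have hne : ((m j.succ - m 0 : ℕ) : ℝ) ≠ 0 := by
        have h1 : m 0 < m j.succ := hm (Fin.succ_pos j)
        exact Nat.cast_ne_zero.mpr (by omega)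
      have := this j
      rcases mul_eq_zero.mp this with h | h
      · exact h
      · exact absurd h hne
    have hc0 : c 0 = 0 := by
      have h0 := hsum 0
      rw [Fin.sum_univ_succ] at h0
      have hz : ∀ j : Fin k, c j.succ * x 0 ^ m j.succ = 0 := by
        intro j; rw [hcsucc j, zero_mul]
      rw [Finset.sum_eq_zero (fun j _ => hz j), add_zero] at h0
      rcases mul_eq_zero.mp h0 with h | h
      · exact h
      · exact absurd h (pow_ne_zero _ (hx 0).ne')
    intro j
    rcases Fin.eq_zero_or_eq_succ j with rfl | ⟨j', rfl⟩
    · exact hc0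
    · exact hcsucc j'

lemma gvdm_det_ne_zero {k : ℕ} (x : Fin k → ℝ) (m : Fin k → ℕ)
    (hx : ∀ i, 0 < x i) (hxm : StrictMono x) (hm : StrictMono m) :
    (Matrix.of fun i j => x i ^ m j).det ≠ 0 := by
  intro hdet
  obtain ⟨v, hv, hmv⟩ := (Matrix.exists_mulVec_eq_zero_iff).mpr hdet
  have hall := cheb k m hm v x hx hxm (fun i => by
    have h := congrFun hmv i
    simpa [Matrix.mulVec, dotProduct, mul_comm] using h)
  exact hv (funext hall)

lemma gvdm_det_pos : ∀ (k : ℕ) (x : Fin k → ℝ) (m : Fin k → ℕ),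
    (∀ i, 0 < x i) → StrictMono x → StrictMono m →
    0 < (Matrix.of fun i j => x i ^ m j).det := by
  intro k
  induction k with
  | zero => intro x m _ _ _; simp [Matrix.det_fin_zero]
  | succ k ih =>
    intro x m hx hxm hm
    rcases Nat.eq_zero_or_pos k with rfl | hkpos
    · have : (Matrix.of fun (i : Fin 1) (j : Fin 1) => x i ^ m j).det = x 0 ^ m 0 := by
        rw [Matrix.det_fin_one]; rfl
      rw [this]
      exact pow_pos (hx 0) _
    -- general case k ≥ 1
    set u : ℝ → Fin (k+1) → ℝ := fun t => Function.update x (Fin.last k) t with hu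
    set g : ℝ → ℝ := fun t => (Matrix.of fun i j => u t i ^ m j).det with hg
    have hglast : g (x (Fin.last k)) = (Matrix.of fun i j => x i ^ m j).det := by
      rw [hg]; simp only [hu, Function.update_eq_self]
    -- u t positive / strictmono for t ≥ x last
    have hupos : ∀ t, x (Fin.last k) ≤ t → ∀ i, 0 < u t i := by
      intro t ht i
      by_cases h : i = Fin.last k
      · subst h; rw [hu]; simp only [Function.update_self]; exact lt_of_lt_of_le (hx _) ht
      · rw [hu]; simp only [Function.update_of_ne h]; exact hx i
    have humono : ∀ t, x (Fin.last k) ≤ t → StrictMono (u t) := by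
      intro t ht a b hab
      have hane : a ≠ Fin.last k := by
        intro h; subst h
        exact absurd hab (not_lt.mpr (Fin.le_last b))
      by_cases hbe : b = Fin.last k
      · subst hbe
        rw [hu]; simp only [Function.update_self, Function.update_of_ne hane]
        exact lt_of_lt_of_le (hxm hab) ht
      · rw [hu]; simp only [Function.update_of_ne hane, Function.update_of_ne hbe]
        exact hxm hab
    have hgne : ∀ t, x (Fin.last k) ≤ t → g t ≠ 0 := by
      intro t ht
      exact gvdm_det_ne_zero (u t) m (hupos t ht) (humono t ht) hm
    -- continuity of g
    have hgcont : Continuous g := by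
      apply Continuous.matrix_det
      apply continuous_matrix
      intro i j
      by_cases h : i = Fin.last k
      · subst h
        simp only [Matrix.of_apply, hu, Function.update_self]
        exact continuous_pow _
      · simp only [Matrix.of_apply, hu, Function.update_of_ne h]
        exact continuous_const
    -- cofactor expansion
    set D : Fin (k+1) → ℝ := fun j =>
      (Matrix.of fun (i : Fin k) (j' : Fin k) =>
        x i.castSucc ^ m (j.succAbove j')).det with hDdef
    have hexp : ∀ t, g t = ∑ j : Fin (k+1),
        (-1 : ℝ) ^ ((Fin.last k : ℕ) + (j : ℕ)) * t ^ m j * D j := by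
      intro t
      rw [hg]
      simp only
      rw [Matrix.det_succ_row _ (Fin.last k)]
      refine Finset.sum_congr rfl fun j _ => ?_
      congr 1
      · congr 1
        simp only [Matrix.of_apply, hu, Function.update_self]
      · rw [hDdef]
        congr 1
        ext i j'
        simp only [Matrix.submatrix_apply, Matrix.of_apply, hu, Fin.succAbove_last,
          Function.update_of_ne (Fin.castSucc_lt_last i).ne]
    -- D at last is positive
    have hDlast : 0 < D (Fin.last k) := by
      rw [hDdef]
      simp only [Fin.succAbove_last]
      exact ih (fun i => x i.castSucc) (fun j' => m j'.castSucc)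
        (fun i => hx _) (fun a b hab => hxm (by simpa using hab))
        (fun a b hab => hm (by simpa using hab))
    -- large t positivity
    have hMpos : 1 ≤ m (Fin.last k) := by
      have : m 0 < m (Fin.last k) := hm (by
        simp [Fin.lt_iff_val_lt_val, Fin.last]; omega)
      omega
    set C : ℝ := ∑ j : Fin (k+1), |D j| with hC
    have hCnonneg : 0 ≤ C := Finset.sum_nonneg fun j _ => abs_nonneg _
    set T : ℝ := max (max 1 (x (Fin.last k))) ((C + 1) / D (Fin.last k)) with hT
    have hT1 : (1:ℝ) ≤ T := le_trans (le_max_left _ _) (le_max_left _ _)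
    have hTlast : x (Fin.last k) ≤ T := le_trans (le_max_right _ _) (le_max_left _ _)
    have hTC : C < D (Fin.last k) * T := by
      have h1 : (C + 1) / D (Fin.last k) ≤ T := le_max_right _ _
      have := (div_le_iff₀ hDlast).mp h1
      nlinarith
    have hgT : 0 < g T := by
      rw [hexp T]
      rw [← Finset.add_sum_erase _ _ (Finset.mem_univ (Fin.last k))]
      have hsign : (-1 : ℝ) ^ ((Fin.last k : ℕ) + (Fin.last k : ℕ)) = 1 := by
        rw [← two_mul, pow_mul]; norm_num
      rw [hsign, one_mul]
      have hbound : ∀ j ∈ Finset.univ.erase (Fin.last k),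
          -(|D j| * T ^ (m (Fin.last k) - 1)) ≤
            (-1 : ℝ) ^ ((Fin.last k : ℕ) + (j : ℕ)) * T ^ m j * D j := by
        intro j hj
        have hjne : j ≠ Fin.last k := Finset.ne_of_mem_erase hj
        have hmj : m j ≤ m (Fin.last k) - 1 := by
          have : m j < m (Fin.last k) := hm (Fin.lt_last_iff_ne_last.mpr hjne)
          omega
        have hTpow : T ^ m j ≤ T ^ (m (Fin.last k) - 1) :=
          pow_le_pow_right₀ hT1 hmj
        have h1 : |(-1 : ℝ) ^ ((Fin.last k : ℕ) + (j : ℕ)) * T ^ m j * D j| ≤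
            |D j| * T ^ (m (Fin.last k) - 1) := by
          rw [abs_mul, abs_mul, abs_pow, abs_neg, abs_one, one_pow, one_mul,
            abs_of_nonneg (pow_nonneg (le_trans zero_le_one hT1) _)]
          rw [mul_comm]
          exact mul_le_mul_of_nonneg_left hTpow (abs_nonneg _)
        linarith [neg_abs_le ((-1 : ℝ) ^ ((Fin.last k : ℕ) + (j : ℕ)) * T ^ m j * D j)]
      have hsum_bound : -(C * T ^ (m (Fin.last k) - 1)) ≤
          ∑ j ∈ Finset.univ.erase (Fin.last k),
            (-1 : ℝ) ^ ((Fin.last k : ℕ) + (j : ℕ)) * T ^ m j * D j := by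
        calc -(C * T ^ (m (Fin.last k) - 1))
            ≤ ∑ j ∈ Finset.univ.erase (Fin.last k), -(|D j| * T ^ (m (Fin.last k) - 1)) := by
              have heq : ∑ j ∈ Finset.univ.erase (Fin.last k),
                  -(|D j| * T ^ (m (Fin.last k) - 1)) =
                  -∑ j ∈ Finset.univ.erase (Fin.last k),
                    |D j| * T ^ (m (Fin.last k) - 1) := by
                rw [Finset.sum_neg_distrib]
              rw [heq, neg_le_neg_iff, hC, Finset.sum_mul]
              apply Finset.sum_le_sum_of_subset_of_nonneg (Finset.erase_subset _ _)
              intro j _ _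
              positivity
          _ ≤ _ := Finset.sum_le_sum hbound
      have hTpow : T ^ m (Fin.last k) = T ^ (m (Fin.last k) - 1) * T := by
        rw [← pow_succ]
        congr 1
        omega
      have hTpownn : 0 < T ^ (m (Fin.last k) - 1) :=
        pow_pos (lt_of_lt_of_le zero_lt_one hT1) _
      have key : 0 < T ^ m (Fin.last k) * D (Fin.last k) - C * T ^ (m (Fin.last k) - 1) := by
        rw [hTpow]
        have : T ^ (m (Fin.last k) - 1) * T * D (Fin.last k) - C * T ^ (m (Fin.last k) - 1)
            = T ^ (m (Fin.last k) - 1) * (D (Fin.last k) * T - C) := by ring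
        rw [this]
        exact mul_pos hTpownn (by linarith)
      linarith
    -- conclude by IVT
    by_contra hneg
    push_neg at hneg
    rw [← hglast] at hneg
    have hne := hgne (x (Fin.last k)) le_rfl
    have hlt : g (x (Fin.last k)) < 0 := lt_of_le_of_ne hneg hne
    have hmem : (0:ℝ) ∈ Set.Icc (g (x (Fin.last k))) (g T) := ⟨le_of_lt hlt, le_of_lt hgT⟩
    obtain ⟨t, ht, hgt⟩ := intermediate_value_Icc hTlast hgcont.continuousOn hmem
    exact hgne t ht.1 hgt

/-- The Gaussian kernel matrix `r^((i-j)^2)`. -/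
noncomputable def gaussMat (n : ℕ) (r : ℝ) : Matrix (Fin n) (Fin n) ℝ :=
  Matrix.of fun i j => r ^ ((((i : ℕ) : ℤ) - ((j : ℕ) : ℤ)) ^ 2).toNat

lemma gauss_entry_factor {r : ℝ} (h0 : 0 < r) (X Y : ℕ) :
    r ^ (((X : ℤ) - (Y : ℤ)) ^ 2).toNat
      = r ^ (X ^ 2) * (r ^ (Y ^ 2) * ((1 / r ^ 2) ^ X) ^ Y) := by
  have hr : r ≠ 0 := h0.ne'
  have hinv : (1 / r ^ 2) = r ^ (-2 : ℤ) := by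
    rw [_root_.zpow_neg, one_div]
    norm_cast
  rw [← zpow_natCast r ((((X : ℤ) - (Y : ℤ)) ^ 2).toNat), Int.toNat_of_nonneg (sq_nonneg _),
    ← zpow_natCast r (X ^ 2), ← zpow_natCast r (Y ^ 2), hinv,
    ← zpow_natCast (r ^ (-2 : ℤ)) X, ← _root_.zpow_mul, ← zpow_natCast (r ^ ((-2 : ℤ) * (X : ℤ))) Y,
    ← _root_.zpow_mul, ← zpow_add₀ hr, ← zpow_add₀ hr]
  congr 1
  push_cast
  ring

lemma gauss_gen_det_pos {k : ℕ} {r : ℝ} (h0 : 0 < r) (h1 : r < 1)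
    (x y : Fin k → ℕ) (hx : StrictMono x) (hy : StrictMono y) :
    0 < (Matrix.of fun i j : Fin k => r ^ (((x i : ℤ) - (y j : ℤ)) ^ 2).toNat).det := by
  have hq : 1 < 1 / r ^ 2 := by
    rw [lt_div_iff₀ (by positivity)]
    nlinarith
  have hqpos : 0 < 1 / r ^ 2 := by positivity
  set a : Fin k → ℝ := fun i => (1 / r ^ 2) ^ x i with ha
  have hfac : (Matrix.of fun i j : Fin k => r ^ (((x i : ℤ) - (y j : ℤ)) ^ 2).toNat)
      = Matrix.of fun i j =>
          (r ^ (x i ^ 2)) * ((Matrix.of fun i j : Fin k =>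
            (r ^ (y j ^ 2)) * ((Matrix.of fun i j : Fin k => a i ^ y j) i j)) i j) := by
    ext i j
    simp only [Matrix.of_apply, ha]
    exact gauss_entry_factor h0 (x i) (y j)
  rw [hfac, Matrix.det_mul_column, Matrix.det_mul_row]
  have hgv : 0 < (Matrix.of fun i j : Fin k => a i ^ y j).det := by
    apply gvdm_det_pos k a y
    · intro i; positivity
    · intro i j hij
      exact pow_lt_pow_right₀ hq (hx hij)
    · exact hy
  have p1 : 0 < ∏ i, r ^ (x i ^ 2) := Finset.prod_pos fun i _ => by positivity
  have p2 : 0 < ∏ j, r ^ (y j ^ 2) := Finset.prod_pos fun j _ => by positivity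
  positivity

lemma gauss_minor_pos {n k : ℕ} {r : ℝ} (h0 : 0 < r) (h1 : r < 1)
    (f g : Fin k → Fin n) (hf : StrictMono f) (hg : StrictMono g) :
    0 < ((gaussMat n r).submatrix f g).det := by
  have : (gaussMat n r).submatrix f g
      = Matrix.of fun i j : Fin k =>
          r ^ ((((f i : ℕ) : ℤ) - ((g j : ℕ) : ℤ)) ^ 2).toNat := by
    ext i j
    rfl
  rw [this]
  exact gauss_gen_det_pos h0 h1 (fun i => (f i : ℕ)) (fun j => (g j : ℕ))
    (fun a b hab => hf hab) (fun a b hab => hg hab)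


lemma det_mul_expand {k n : ℕ} (A : Matrix (Fin k) (Fin n) ℝ) (B : Matrix (Fin n) (Fin k) ℝ) :
    (A * B).det = ∑ p : Fin k → Fin n, (∏ i, A i (p i)) * (B.submatrix p id).det := by
  have h1 : (A * B).det
      = Matrix.detRowAlternating (fun i : Fin k => ∑ l : Fin n, A i l • B l) := by
    congr 1
    ext i j
    simp [Matrix.mul_apply]
  rw [h1]
  rw [show (Matrix.detRowAlternating (fun i : Fin k => ∑ l : Fin n, A i l • B l) : ℝ)
      = Matrix.detRowAlternating.toMultilinearMap (fun i : Fin k => ∑ l : Fin n, A i l • B l)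
      from rfl]
  rw [MultilinearMap.map_sum]
  refine Finset.sum_congr rfl fun p _ => ?_
  rw [show (fun i => (fun i l => A i l • B l) i (p i)) = fun i => A i (p i) • B (p i) from rfl]
  rw [MultilinearMap.map_smul_univ]
  rw [smul_eq_mul]
  rfl

section CauchyBinet

variable {k n : ℕ}

noncomputable def tauOf (S : Finset (Fin n)) (hS : S.card = k) : Fin k → Fin n :=
  fun i => ((S.orderIsoOfFin hS) i : Fin n)

lemma tauOf_strictMono (S : Finset (Fin n)) (hS : S.card = k) : StrictMono (tauOf S hS) :=
  fun a b hab => (S.orderIsoOfFin hS).lt_iff_lt.mpr hab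

lemma tauOf_mem (S : Finset (Fin n)) (hS : S.card = k) (i : Fin k) : tauOf S hS i ∈ S :=
  ((S.orderIsoOfFin hS) i).2

lemma tauOf_inj (S : Finset (Fin n)) (hS : S.card = k) : Function.Injective (tauOf S hS) :=
  (tauOf_strictMono S hS).injective

lemma image_tauOf (S : Finset (Fin n)) (hS : S.card = k) :
    Finset.univ.image (tauOf S hS) = S := by
  apply Finset.eq_of_subset_of_card_le
  · intro a ha
    obtain ⟨i, _, rfl⟩ := Finset.mem_image.mp ha
    exact tauOf_mem S hS i
  · rw [hS, Finset.card_image_of_injective _ (tauOf_inj S hS), Finset.card_univ,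
      Fintype.card_fin]

lemma orderIsoOfFin_symm_congr {S T : Finset (Fin n)} (h : S = T)
    (hS : S.card = k) (hT : T.card = k) (a : Fin n) (ha : a ∈ S) (ha' : a ∈ T) :
    (S.orderIsoOfFin hS).symm ⟨a, ha⟩ = (T.orderIsoOfFin hT).symm ⟨a, ha'⟩ := by
  subst h; rfl

lemma tauOf_symm_apply (S : Finset (Fin n)) (hS : S.card = k) (i : Fin k)
    (h : tauOf S hS i ∈ S) : (S.orderIsoOfFin hS).symm ⟨tauOf S hS i, h⟩ = i := by
  have : (⟨tauOf S hS i, h⟩ : {x // x ∈ S}) = (S.orderIsoOfFin hS) i := by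
    apply Subtype.ext; rfl
  rw [this, OrderIso.symm_apply_apply]

lemma cauchyBinet (A : Matrix (Fin k) (Fin n) ℝ) (B : Matrix (Fin n) (Fin k) ℝ) :
    (A * B).det = ∑ S : {S : Finset (Fin n) // S.card = k},
      minorCols A S.1 S.2 * minorRows B S.1 S.2 := by
  classical
  rw [det_mul_expand]
  rw [← Finset.sum_filter_add_sum_filter_not Finset.univ
    (fun p : Fin k → Fin n => Function.Injective p)]
  have hzero : ∑ p ∈ Finset.univ.filter
      (fun p : Fin k → Fin n => ¬ Function.Injective p),
      (∏ i, A i (p i)) * (B.submatrix p id).det = 0 := by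
    apply Finset.sum_eq_zero
    intro p hp
    have hni : ¬ Function.Injective p := (Finset.mem_filter.mp hp).2
    rw [Function.not_injective_iff] at hni
    obtain ⟨a, b, hab, hne⟩ := hni
    have : (B.submatrix p id).det = 0 := by
      apply Matrix.det_zero_of_row_eq hne
      funext l
      simp [Matrix.submatrix_apply, hab]
    rw [this, mul_zero]
  rw [hzero, add_zero]
  -- bijection with pairs (S, σ)
  have hbij : ∑ p ∈ Finset.univ.filter
      (fun p : Fin k → Fin n => Function.Injective p),
      (∏ i, A i (p i)) * (B.submatrix p id).det
      = ∑ Sσ : {S : Finset (Fin n) // S.card = k} × Equiv.Perm (Fin k),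
        (∏ i, A i (tauOf Sσ.1.1 Sσ.1.2 (Sσ.2 i)))
          * (B.submatrix (fun i => tauOf Sσ.1.1 Sσ.1.2 (Sσ.2 i)) id).det := by
    apply Finset.sum_bij'
      (i := fun (p : Fin k → Fin n) (hp : p ∈ Finset.univ.filter
        (fun p : Fin k → Fin n => Function.Injective p)) =>
        (⟨⟨Finset.univ.image p, by
            rw [Finset.card_image_of_injective _ (Finset.mem_filter.mp hp).2,
              Finset.card_univ, Fintype.card_fin]⟩,
          Equiv.ofBijective
            (fun i => ((Finset.univ.image p).orderIsoOfFin (by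
              rw [Finset.card_image_of_injective _ (Finset.mem_filter.mp hp).2,
                Finset.card_univ, Fintype.card_fin])).symm
              ⟨p i, Finset.mem_image_of_mem p (Finset.mem_univ i)⟩)
            (Finite.injective_iff_bijective.mp (by
              intro a b hab
              apply (Finset.mem_filter.mp hp).2
              have h2 := congrArg (fun z => ((((Finset.univ.image p).orderIsoOfFin (by
                rw [Finset.card_image_of_injective _ (Finset.mem_filter.mp hp).2,
                  Finset.card_univ, Fintype.card_fin])) z : {x // x ∈ Finset.univ.image p}) : Fin n)) hab
              simpa using h2))⟩ :
          {S : Finset (Fin n) // S.card = k} × Equiv.Perm (Fin k)))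
      (j := fun Sσ _ => fun i => tauOf Sσ.1.1 Sσ.1.2 (Sσ.2 i))
    case hi =>
      intro p hp
      exact Finset.mem_univ _
    case hj =>
      intro Sσ _
      rw [Finset.mem_filter]
      exact ⟨Finset.mem_univ _,
        (tauOf_inj Sσ.1.1 Sσ.1.2).comp Sσ.2.injective⟩
    case left_neg =>
      intro p hp
      funext x
      simp only [Equiv.ofBijective_apply]
      exact congrArg Subtype.val
        (((Finset.univ.image p).orderIsoOfFin _).apply_symm_apply
          ⟨p x, Finset.mem_image_of_mem p (Finset.mem_univ x)⟩)
    case right_neg =>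
      intro Sσ _
      obtain ⟨⟨S, hS⟩, σ⟩ := Sσ
      have himg : Finset.univ.image (fun i => tauOf S hS (σ i)) = S := by
        have h1 : Finset.univ.image (fun i => tauOf S hS (σ i))
            = Finset.univ.image (tauOf S hS) := by
          rw [show (fun i => tauOf S hS (σ i)) = tauOf S hS ∘ σ from rfl,
            ← Finset.image_image, Finset.image_univ_equiv]
        rw [h1, image_tauOf]
      refine Prod.ext (Subtype.ext himg) ?_
      refine Equiv.ext fun x => ?_
      simp only [Equiv.ofBijective_apply]
      rw [orderIsoOfFin_symm_congr himg _ hS _ _ (tauOf_mem S hS (σ x))]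
      exact tauOf_symm_apply S hS (σ x) _
    case h =>
      intro p hp
      congr 1
      · apply Finset.prod_congr rfl
        intro i _
        congr 1
        simp only [Equiv.ofBijective_apply]
        exact (congrArg Subtype.val
          (((Finset.univ.image p).orderIsoOfFin _).apply_symm_apply
            ⟨p i, Finset.mem_image_of_mem p (Finset.mem_univ i)⟩)).symm
      · congr 1
        funext x l
        simp only [Matrix.submatrix_apply]
        congr 1
        simp only [Equiv.ofBijective_apply]
        exact (congrArg Subtype.val
          (((Finset.univ.image p).orderIsoOfFin _).apply_symm_apply
            ⟨p x, Finset.mem_image_of_mem p (Finset.mem_univ x)⟩)).symm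
  rw [hbij]
  rw [Fintype.sum_prod_type]
  refine Finset.sum_congr rfl fun S _ => ?_
  -- inner sum over permutations
  have hinner : ∀ σ : Equiv.Perm (Fin k),
      (B.submatrix (fun i => tauOf S.1 S.2 (σ i)) id).det
        = (Equiv.Perm.sign σ : ℝ) * minorRows B S.1 S.2 := by
    intro σ
    have h1 : (B.submatrix (fun i => tauOf S.1 S.2 (σ i)) id)
        = (B.submatrix (tauOf S.1 S.2) id).submatrix σ id := by
      rw [Matrix.submatrix_submatrix]
      rfl
    rw [h1, Matrix.det_permute]
    rfl
  calc ∑ σ : Equiv.Perm (Fin k),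
      (∏ i, A i (tauOf S.1 S.2 (σ i)))
        * (B.submatrix (fun i => tauOf S.1 S.2 (σ i)) id).det
      = (∑ σ : Equiv.Perm (Fin k), (Equiv.Perm.sign σ : ℝ)
          * ∏ i, A i (tauOf S.1 S.2 (σ i))) * minorRows B S.1 S.2 := by
        rw [Finset.sum_mul]
        refine Finset.sum_congr rfl fun σ _ => ?_
        rw [hinner σ]
        ring
    _ = minorCols A S.1 S.2 * minorRows B S.1 S.2 := by
        congr 1
        have h2 : ((A.submatrix id (tauOf S.1 S.2))ᵀ).det
            = ∑ σ : Equiv.Perm (Fin k), (Equiv.Perm.sign σ : ℝ)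
              * ∏ i, A i (tauOf S.1 S.2 (σ i)) := by
          rw [Matrix.det_apply']
          refine Finset.sum_congr rfl fun σ _ => ?_
          rfl
        rw [← h2, Matrix.det_transpose]
        rfl

end CauchyBinet

lemma exists_minor_ne_zero {k n : ℕ} (A : Matrix (Fin k) (Fin n) ℝ) (h : A.rank = k) :
    ∃ (S : Finset (Fin n)) (hS : S.card = k), minorCols A S hS ≠ 0 := by
  classical
  have hspan : Submodule.span ℝ (Set.range A.col) = ⊤ := by
    apply Submodule.eq_top_of_finrank_eq
    rw [← Matrix.rank_eq_finrank_span_cols, h, Module.finrank_fin_fun]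
  obtain ⟨b, hbsub, hbspan, hbli⟩ := exists_linearIndependent ℝ (Set.range A.col)
  rw [hspan] at hbspan
  have hbfin : b.Finite := hbli.setFinite
  haveI : Fintype b := hbfin.fintype
  have hbasis : Module.Basis b ℝ (Fin k → ℝ) := Module.Basis.mk hbli (by rw [Subtype.range_coe, hbspan])
  have hcard : Fintype.card b = k := by
    rw [← Module.finrank_eq_card_basis hbasis, Module.finrank_fin_fun]
  have hidx : ∀ v : b, ∃ j : Fin n, Aᵀ j = (v : Fin k → ℝ) := fun v => hbsub v.2
  choose idx hidx_spec using hidx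
  have hidx_inj : Function.Injective idx := by
    intro v w hvw
    apply Subtype.ext
    rw [← hidx_spec v, ← hidx_spec w, hvw]
  set S : Finset (Fin n) := Finset.univ.image idx with hSdef
  have hScard : S.card = k := by
    rw [hSdef, Finset.card_image_of_injective _ hidx_inj, Finset.card_univ, hcard]
  refine ⟨S, hScard, ?_⟩
  have hmem : ∀ i : Fin k, ∃ v : b, idx v = tauOf S hScard i := by
    intro i
    have htm := tauOf_mem S hScard i
    obtain ⟨v, _, hv⟩ := Finset.mem_image.mp htm
    exact ⟨v, hv⟩
  choose w hw using hmem
  have hwinj : Function.Injective w := by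
    intro i j hij
    apply tauOf_inj S hScard
    rw [← hw i, ← hw j, hij]
  have hfam : (fun i => (A.submatrix id (tauOf S hScard))ᵀ i)
      = fun i => ((w i : Fin k → ℝ)) := by
    funext i
    have h1 : (A.submatrix id (tauOf S hScard))ᵀ i = Aᵀ (tauOf S hScard i) := rfl
    rw [h1, ← hw i, hidx_spec (w i)]
  have hli : LinearIndependent ℝ (fun i => (A.submatrix id (tauOf S hScard))ᵀ i) := by
    rw [hfam]
    exact hbli.comp w hwinj
  have hunit : IsUnit (A.submatrix id (tauOf S hScard)) :=
    Matrix.linearIndependent_cols_iff_isUnit.mp hli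
  have hdet : IsUnit (A.submatrix id (tauOf S hScard)).det :=
    (Matrix.isUnit_iff_isUnit_det _).mp hunit
  exact hdet.ne_zero

lemma rank_submatrix_cols_le {k k' n : ℕ} (M : Matrix (Fin k) (Fin n) ℝ)
    (g : Fin k' → Fin n) : (M.submatrix id g).rank ≤ M.rank := by
  have h1 : M.submatrix id g = M * (1 : Matrix (Fin n) (Fin n) ℝ).submatrix id g := by
    ext i j
    rw [Matrix.mul_apply]
    simp [Matrix.one_apply, Matrix.submatrix_apply]
  rw [h1]
  exact Matrix.rank_mul_le_left _ _

/-- If `piVec M ≠ 0` then `M` has rank `k`. -/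
lemma rank_eq_of_piVec_ne_zero {k : ℕ} (M : Matrix (Fin k) (Fin (k + 1)) ℝ)
    (h : (fun j : Fin (k+1) => (-1 : ℝ) ^ (j : ℕ) * (M.submatrix id j.succAbove).det)
      ≠ (0 : Fin (k+1) → ℝ)) : M.rank = k := by
  have hle : M.rank ≤ k := by
    have := Matrix.rank_le_card_height M
    simpa using this
  have hge : k ≤ M.rank := by
    obtain ⟨j, hj⟩ := Function.ne_iff.mp h
    have hdet : (M.submatrix id j.succAbove).det ≠ 0 := by
      intro h0
      apply hj
      simp [h0]
    have hrank : (M.submatrix id j.succAbove).rank = k := by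
      have := Matrix.rank_of_isUnit _ ((Matrix.isUnit_iff_isUnit_det _).mpr (Ne.isUnit hdet))
      simpa using this
    calc k = (M.submatrix id j.succAbove).rank := hrank.symm
      _ ≤ M.rank := rank_submatrix_cols_le M j.succAbove
  omega

lemma mulGauss_totallyPos {k n : ℕ} (A : Matrix (Fin k) (Fin n) ℝ)
    (hTNN : IsTotallyNonneg A)
    (S₀ : Finset (Fin n)) (hS₀ : S₀.card = k) (hm0 : minorCols A S₀ hS₀ ≠ 0)
    {r : ℝ} (h0r : 0 < r) (h1r : r < 1) :
    IsTotallyPos (A * gaussMat n r) := by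
  intro J hJ
  have hsub : (A * gaussMat n r).submatrix id (fun i => ((J.orderIsoOfFin hJ) i : Fin n))
      = A * (gaussMat n r).submatrix id (tauOf J hJ) := by
    ext i j
    simp [Matrix.mul_apply, Matrix.submatrix_apply, tauOf]
  rw [minorCols, hsub, cauchyBinet]
  apply Finset.sum_pos'
  · intro S _
    apply mul_nonneg (hTNN S.1 S.2)
    have : minorRows ((gaussMat n r).submatrix id (tauOf J hJ)) S.1 S.2
        = ((gaussMat n r).submatrix (tauOf S.1 S.2) (tauOf J hJ)).det := by
      rw [minorRows, Matrix.submatrix_submatrix]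
      rfl
    rw [this]
    exact le_of_lt (gauss_minor_pos h0r h1r _ _ (tauOf_strictMono S.1 S.2)
      (tauOf_strictMono J hJ))
  · refine ⟨⟨S₀, hS₀⟩, Finset.mem_univ _, ?_⟩
    apply mul_pos (lt_of_le_of_ne (hTNN S₀ hS₀) (Ne.symm hm0))
    have : minorRows ((gaussMat n r).submatrix id (tauOf J hJ)) S₀ hS₀
        = ((gaussMat n r).submatrix (tauOf S₀ hS₀) (tauOf J hJ)).det := by
      rw [minorRows, Matrix.submatrix_submatrix]
      rfl
    rw [this]
    exact gauss_minor_pos h0r h1r _ _ (tauOf_strictMono S₀ hS₀) (tauOf_strictMono J hJ)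

lemma gaussMat_zero (n : ℕ) : gaussMat n 0 = 1 := by
  ext i j
  simp only [gaussMat, Matrix.of_apply]
  by_cases h : i = j
  · subst h
    simp [Matrix.one_apply_eq]
  · have hne : ((i : ℕ) : ℤ) ≠ ((j : ℕ) : ℤ) := by
      intro hc
      exact h (Fin.ext (by exact_mod_cast hc))
    have hpos : 0 < ((((i : ℕ) : ℤ) - ((j : ℕ) : ℤ)) ^ 2) := by
      have := sub_ne_zero_of_ne hne
      positivity
    have : ((((i : ℕ) : ℤ) - ((j : ℕ) : ℤ)) ^ 2).toNat ≠ 0 := by omega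
    rw [zero_pow this, Matrix.one_apply_ne h]

lemma projMk_congr {K V : Type*} [DivisionRing K] [AddCommGroup V] [Module K V]
    {v w : V} (h : v = w) (hv : v ≠ 0) (hw : w ≠ 0) :
    Projectivization.mk K v hv = Projectivization.mk K w hw := by
  subst h; rfl

/-- If `Z` has rank `k+1` and no zero rows, then the rational Grasstope of
`Z` is contained in the topological closure of the open rational Grasstope of `Z`. -/
theorem stmt11 (k n : ℕ) (hk : 1 ≤ k) (hn : k + 1 ≤ n)
    (Z : Matrix (Fin n) (Fin (k + 1)) ℝ) (hZ : Z.rank = k + 1)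
    (hrows : ∀ i : Fin n, Z i ≠ 0) :
    grasstope1 Z ⊆ closure (openGrasstope1 Z) := by
  classical
  intro P hP
  obtain ⟨A, hpi, hTNN, hrankA, hrankAZ, hPeq⟩ := hP
  obtain ⟨S₀, hS₀, hm0⟩ := exists_minor_ne_zero A hrankA
  set v : ℝ → (Fin (k + 1) → ℝ) := fun r => piVec (A * gaussMat n r * Z) with hv
  have hv0 : v 0 = piVec (A * Z) := by
    rw [hv]
    simp only
    rw [gaussMat_zero, Matrix.mul_one]
  have h0mem : v 0 ≠ 0 := by rw [hv0]; exact hpi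
  -- continuity
  have hGc : Continuous fun r : ℝ => gaussMat n r :=
    continuous_matrix fun i j => continuous_pow _
  have hMc : Continuous fun r : ℝ => A * gaussMat n r * Z :=
    (continuous_const.matrix_mul hGc).matrix_mul continuous_const
  have hcont : Continuous v := by
    rw [hv]
    unfold piVec
    exact continuous_pi fun j =>
      continuous_const.mul ((hMc.matrix_submatrix id j.succAbove).matrix_det)
  -- the open set where piVec is nonzero
  have hU : IsOpen {r : ℝ | v r ≠ 0} := by
    have : {r : ℝ | v r ≠ 0} = v ⁻¹' ({0}ᶜ) := rfl
    rw [this]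
    exact isOpen_compl_singleton.preimage hcont
  have hev : ∀ᶠ r in 𝓝[>] (0:ℝ), r ∈ Set.Ioo (0:ℝ) 1 ∧ v r ≠ 0 := by
    have h1 : Set.Ioo (0:ℝ) 1 ∈ 𝓝[>] (0:ℝ) :=
      Ioo_mem_nhdsGT (by norm_num)
    have h2 : {r : ℝ | v r ≠ 0} ∈ 𝓝[>] (0:ℝ) :=
      mem_nhdsWithin_of_mem_nhds (hU.mem_nhds h0mem)
    filter_upwards [h1, h2] with r hr1 hr2
    exact ⟨hr1, hr2⟩
  set W : ℝ → {w : Fin (k + 1) → ℝ // w ≠ 0} :=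
    fun r => if h : v r ≠ 0 then ⟨v r, h⟩ else ⟨v 0, h0mem⟩ with hW
  set F : ℝ → Projectivization ℝ (Fin (k + 1) → ℝ) :=
    fun r => Projectivization.mk ℝ (W r).1 (W r).2 with hF
  have hWt : Filter.Tendsto W (𝓝[>] (0:ℝ)) (𝓝 ⟨v 0, h0mem⟩) := by
    rw [tendsto_subtype_rng]
    apply Filter.Tendsto.congr' _ ((hcont.tendsto 0).mono_left nhdsWithin_le_nhds)
    filter_upwards [hev] with r hr
    rw [hW]
    simp only
    rw [dif_pos hr.2]
  have hq : Continuous (fun w : {w : Fin (k + 1) → ℝ // w ≠ 0} =>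
      Projectivization.mk ℝ w.1 w.2) := by
    have : (fun w : {w : Fin (k + 1) → ℝ // w ≠ 0} => Projectivization.mk ℝ w.1 w.2)
        = fun w => Quotient.mk'' w := by
      funext w
      rfl
    rw [this]
    exact continuous_quotient_mk'
  have hFt : Filter.Tendsto F (𝓝[>] (0:ℝ)) (𝓝 (Projectivization.mk ℝ (v 0) h0mem)) := by
    have := (hq.tendsto ⟨v 0, h0mem⟩).comp hWt
    exact this
  have hFev : ∀ᶠ r in 𝓝[>] (0:ℝ), F r ∈ openGrasstope1 Z := by
    filter_upwards [hev] with r hr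
    have hWr : W r = ⟨v r, hr.2⟩ := by rw [hW]; simp only; rw [dif_pos hr.2]
    have hpir : piVec ((A * gaussMat n r) * Z) ≠ 0 := hr.2
    refine ⟨A * gaussMat n r, hpir, ?_, ?_, ?_⟩
    · exact mulGauss_totallyPos A hTNN S₀ hS₀ hm0 hr.1.1 hr.1.2
    · exact rank_eq_of_piVec_ne_zero _ hpir
    · rw [hF]
      simp only
      rw [hWr]
  have hmkeq : Projectivization.mk ℝ (v 0) h0mem
      = Projectivization.mk ℝ (piVec (A * Z)) hpi := projMk_congr hv0 _ _
  rw [hPeq, ← hmkeq]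
  exact mem_closure_of_tendsto hFt hFev
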